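/- Let h be any function, and let μ ≥ 0 be a profile such that for every i, μ_i maximizes q ↦ v_i(q) − C(q + ‖μ_{-i}‖) over q ≥ 0 (equivalently, μ_i is a best response of consumer i in the game with surpluses W_i, since W_i(q_i, μ_{-i}) differs from v_i(q_i) − C(q_i + ‖μ_{-i}‖) by a term independent of q_i). If h(‖μ_{-i}‖) − p(‖μ_{-i}‖) ≥ 0 (the condition read as holding automatically when ‖μ_{-i}‖ = 0), then the mechanism is individually rational for consumer i: W_i(μ) ≥ 0. -/
import Mathlib


open Finset Set

/-- If `μ_i` maximizes `q ↦ v_i(q) − C(q + ‖μ_{-i}‖)` over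
`q ≥ 0` for every `i`, and `h(‖μ_{-i}‖) − p(‖μ_{-i}‖) ≥ 0` (automatic when
`‖μ_{-i}‖ = 0`), then the mechanism is individually rational for consumer `i`:
`W_i(μ) = v_i(μ_i) − C(‖μ‖) + ‖μ_{-i}‖·h(‖μ_{-i}‖) ≥ 0`. -/
theorem statement_7
    (N : ℕ) (v v' : Fin N → ℝ → ℝ) (C p h : ℝ → ℝ)
    (hv_deriv : ∀ i x, HasDerivAt (v i) (v' i x) x)
    (hv_concave : ∀ i, ConcaveOn ℝ (Ici (0 : ℝ)) (v i))
    (hv_mono : ∀ i, MonotoneOn (v i) (Ici (0 : ℝ)))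
    (hv0 : ∀ i, v i 0 = 0)
    (hC_diff : DifferentiableOn ℝ C (Ici (0 : ℝ)))
    (hC_sconvex : StrictConvexOn ℝ (Ici (0 : ℝ)) C)
    (hC0 : C 0 = 0)
    (hCpos : ∀ g : ℝ, 0 < g → 0 < C g)
    (hp : ∀ g : ℝ, 0 < g → p g = C g / g)
    (hp_mono : MonotoneOn p (Ioi (0 : ℝ)))
    (μ : Fin N → ℝ) (hμ_nonneg : ∀ i, 0 ≤ μ i)
    (hμ_max : ∀ i, ∀ x : ℝ, 0 ≤ x →
        v i x - C (x + ((∑ j, μ j) - μ i)) ≤ v i (μ i) - C (∑ j, μ j))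
    (i : Fin N)
    (hcond : 0 < (∑ j, μ j) - μ i →
        p ((∑ j, μ j) - μ i) ≤ h ((∑ j, μ j) - μ i)) :
    0 ≤ v i (μ i) - C (∑ j, μ j) +
        ((∑ j, μ j) - μ i) * h ((∑ j, μ j) - μ i) := by
  set m : ℝ := (∑ j, μ j) - μ i with hm
  have hmax := hμ_max i 0 le_rfl
  rw [hv0 i, zero_add] at hmax
  have hm0 : (0:ℝ) ≤ m := by
    have := Finset.single_le_sum (f := μ) (fun j _ => hμ_nonneg j) (Finset.mem_univ i)
    simp only [hm]; linarith
  rcases eq_or_lt_of_le hm0 with h0 | h0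
  · have h1 : m * h m = 0 := by rw [← h0, zero_mul]
    rw [h1, add_zero]
    rw [hm] at h0
    rw [← h0, hC0] at hmax
    linarith
  · have hph := hcond h0
    have hpm : p m = C m / m := hp m h0
    have : C m ≤ m * h m := by
      have : C m / m ≤ h m := hpm ▸ hph
      calc C m = m * (C m / m) := by field_simp
        _ ≤ m * h m := by nlinarith
    linarith
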